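/- Fix y with 0 < y ≤ 1 and s > 0. Then sup{ u ∈ ℝ : ∫_u^∞ h((x−y)/s) dx ≥ y } equals 0 if s ≤ y, and equals L_y^-(s) = y + s − 2√(sy) if s ≥ y. (Explicit formula for the left edge Λ_y^-(s) in the proof of Theorem 4.3) -/

import Mathlib

open MeasureTheory

/-- The Rost hydrodynamic density profile `h(x) = min(1, max((1-x)/2, 0))`. -/
noncomputable def hRost (x : ℝ) : ℝ := min 1 (max ((1 - x) / 2) 0)

/-- `L_y^-(s) = y + s - 2√(sy)`. -/
noncomputable def Lminus (y s : ℝ) : ℝ := y + s - 2 * Real.sqrt (s * y)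

/-- `L_y^+(s) = y - s + 2√(s(1-y))`. -/
noncomputable def Lplus (y s : ℝ) : ℝ := y - s + 2 * Real.sqrt (s * (1 - y))

/-- `γ_y = 1 + 2√(y(1-y))`. -/
noncomputable def gamma' (y : ℝ) : ℝ := 1 + 2 * Real.sqrt (y * (1 - y))

open Set

lemma hRost_one {t : ℝ} (ht : t ≤ -1) : hRost t = 1 := by
  rw [hRost, max_eq_left (by linarith), min_eq_left (by linarith)]

lemma hRost_mid {t : ℝ} (h1 : -1 ≤ t) (h2 : t ≤ 1) : hRost t = (1 - t) / 2 := by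
  rw [hRost, max_eq_left (by linarith), min_eq_right (by linarith)]

lemma hRost_zero {t : ℝ} (ht : 1 ≤ t) : hRost t = 0 := by
  rw [hRost, max_eq_right (by linarith), min_eq_right (by linarith)]

lemma g_cont (y s : ℝ) : Continuous (fun x => hRost ((x - y) / s)) := by
  unfold hRost; fun_prop

lemma interval_calc (s u b : ℝ) (hs : 0 < s) :
    ∫ x in u..b, (b - x) / (2 * s) = (b - u) ^ 2 / (4 * s) := by
  rw [intervalIntegral.integral_div,
    intervalIntegral.integral_sub intervalIntegrable_const intervalIntegral.intervalIntegrable_id,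
    intervalIntegral.integral_const, integral_id, smul_eq_mul]
  field_simp
  ring

lemma F_top (y s u : ℝ) (hs : 0 < s) (hu : y + s ≤ u) :
    ∫ x in Ioi u, hRost ((x - y) / s) = 0 := by
  rw [setIntegral_congr_fun measurableSet_Ioi (g := fun _ => (0:ℝ))
    (fun x hx => hRost_zero (by rw [le_div_iff₀ hs]; simp only [mem_Ioi] at hx; linarith))]
  simp

lemma g_int_Ioi (y s u : ℝ) (hs : 0 < s) :
    IntegrableOn (fun x => hRost ((x - y) / s)) (Ioi u) := by
  have hzero : IntegrableOn (fun x => hRost ((x - y) / s)) (Ioi (y + s)) := by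
    apply IntegrableOn.congr_fun (integrableOn_zero) _ measurableSet_Ioi
    intro x hx
    exact (hRost_zero (by rw [le_div_iff₀ hs]; simp only [mem_Ioi] at hx; linarith)).symm
  rcases le_or_gt u (y + s) with h | h
  · rw [← Ioc_union_Ioi_eq_Ioi h]
    exact ((g_cont y s).integrableOn_Ioc).union hzero
  · exact hzero.mono_set (Ioi_subset_Ioi h.le)

lemma F_mid (y s u : ℝ) (hs : 0 < s) (h1 : y - s ≤ u) (h2 : u ≤ y + s) :
    ∫ x in Ioi u, hRost ((x - y) / s) = (y + s - u) ^ 2 / (4 * s) := by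
  have heq : EqOn (fun x => hRost ((x - y) / s)) (fun x => (y + s - x) / (2 * s)) (Ioc u (y + s)) := by
    intro x hx
    have hx1 : y - s < x := lt_of_le_of_lt h1 hx.1
    have := hRost_mid (t := (x - y) / s) (by rw [le_div_iff₀ hs]; linarith)
      (by rw [div_le_one hs]; linarith [hx.2])
    simp only [this]
    field_simp
    ring
  rw [← Ioc_union_Ioi_eq_Ioi h2,
    setIntegral_union (Ioc_disjoint_Ioi le_rfl) measurableSet_Ioi
      ((g_cont y s).integrableOn_Ioc) (g_int_Ioi y s (y + s) hs),
    F_top y s (y + s) hs le_rfl, setIntegral_congr_fun measurableSet_Ioc heq,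
    ← intervalIntegral.integral_of_le h2, interval_calc s u (y + s) hs]
  ring

lemma F_low (y s u : ℝ) (hs : 0 < s) (hu : u ≤ y - s) :
    ∫ x in Ioi u, hRost ((x - y) / s) = (y - s - u) + s := by
  have heq : EqOn (fun x => hRost ((x - y) / s)) (fun _ => (1:ℝ)) (Ioc u (y - s)) := by
    intro x hx
    exact hRost_one (by rw [div_le_iff₀ hs]; linarith [hx.2])
  rw [← Ioc_union_Ioi_eq_Ioi hu,
    setIntegral_union (Ioc_disjoint_Ioi le_rfl) measurableSet_Ioi
      ((g_cont y s).integrableOn_Ioc) (g_int_Ioi y s (y - s) hs),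
    F_mid y s (y - s) hs le_rfl (by linarith), setIntegral_congr_fun measurableSet_Ioc heq,
    setIntegral_const, measureReal_def, Real.volume_Ioc, ENNReal.toReal_ofReal (by linarith)]
  have h4 : (y + s - (y - s)) ^ 2 / (4 * s) = s := by field_simp; ring
  rw [h4]; simp

/-- Explicit formula for the left edge `Λ_y^-(s)` in the proof of Theorem 4.3:
`sup{u : ∫_u^∞ h((x-y)/s) dx ≥ y}` equals `0` if `s ≤ y` and `L_y^-(s)` if `s ≥ y`. -/
theorem left_edge_formula (y s : ℝ) (hy0 : 0 < y) (hy1 : y ≤ 1) (hs : 0 < s) :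
    (s ≤ y →
      sSup {u : ℝ | y ≤ ∫ x in Set.Ioi u, hRost ((x - y) / s)} = 0)
    ∧ (y ≤ s →
      sSup {u : ℝ | y ≤ ∫ x in Set.Ioi u, hRost ((x - y) / s)} = Lminus y s) := by
  constructor
  · intro hsy
    have hset : {u : ℝ | y ≤ ∫ x in Set.Ioi u, hRost ((x - y) / s)} = Iic 0 := by
      ext u
      simp only [mem_setOf_eq, mem_Iic]
      constructor
      · intro hu
        by_contra hpos
        push_neg at hpos
        rcases le_or_gt u (y - s) with h | h
        · rw [F_low y s u hs h] at hu; linarith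
        · rcases le_or_gt u (y + s) with h2 | h2
          · rw [F_mid y s u hs h.le h2] at hu
            have hb : 0 ≤ y + s - u := by linarith
            rw [le_div_iff₀ (by linarith : (0:ℝ) < 4 * s)] at hu
            nlinarith
          · rw [F_top y s u hs h2.le] at hu; linarith
      · intro hu
        rw [F_low y s u hs (by linarith)]
        linarith
    rw [hset]; exact csSup_Iic
  · intro hys
    have hr : Real.sqrt (s * y) ^ 2 = s * y := Real.sq_sqrt (by positivity)
    have hr0 : 0 ≤ Real.sqrt (s * y) := Real.sqrt_nonneg _
    have hry : y ≤ Real.sqrt (s * y) := by nlinarith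
    have hrs : Real.sqrt (s * y) ≤ s := by nlinarith
    have hset : {u : ℝ | y ≤ ∫ x in Set.Ioi u, hRost ((x - y) / s)} = Iic (Lminus y s) := by
      ext u
      simp only [mem_setOf_eq, mem_Iic, Lminus]
      constructor
      · intro hu
        rcases le_or_gt u (y - s) with h | h
        · nlinarith
        · rcases le_or_gt u (y + s) with h2 | h2
          · rw [F_mid y s u hs h.le h2] at hu
            rw [le_div_iff₀ (by linarith : (0:ℝ) < 4 * s)] at hu
            nlinarith [Real.sqrt_nonneg (s * y), sq_nonneg (y + s - u - 2 * Real.sqrt (s * y))]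
          · rw [F_top y s u hs h2.le] at hu; linarith
      · intro hu
        rcases le_or_gt u (y - s) with h | h
        · rw [F_low y s u hs h]; linarith
        · have h2 : u ≤ y + s := by nlinarith
          rw [F_mid y s u hs h.le h2]
          rw [le_div_iff₀ (by linarith : (0:ℝ) < 4 * s)]
          nlinarith
    rw [hset]; exact csSup_Iic
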